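/- Let J be a real m×n matrix with singular values σ₁ ≥ σ₂ ≥ … and let w₁,…,w_K be any orthonormal vectors in ℝᵐ that lie in the column space of J. For each i choose δᵢ ∈ ℝⁿ of minimal norm with Jδᵢ = wᵢ. Then Σᵢ ‖δᵢ‖₂² ≥ Σᵢ₌₁ᴷ 1/σᵢ², with equality when wᵢ are the top-K left singular vectors of J (and δᵢ the scaled right singular vectors vᵢ/σᵢ). -/

import Mathlib

open Matrix

lemma dotJJ_aux {m n : ℕ} (J : Matrix (Fin m) (Fin n) ℝ) (x y : Fin n → ℝ) :
    (J *ᵥ x) ⬝ᵥ (J *ᵥ y) = x ⬝ᵥ ((Jᵀ * J) *ᵥ y) := by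
  rw [← mulVec_mulVec]
  conv_rhs => rw [dotProduct_mulVec, vecMul_transpose]

lemma sumE_aux {n K : ℕ} (hK : K ≤ n) (σ : Fin n → ℝ) (hdec : Antitone σ)
    (hσnonneg : ∀ i, 0 ≤ σ i)
    (hpos : ∀ i : Fin K, 0 < σ (Fin.castLE hK i))
    (t : Fin n → ℝ) (ht0 : ∀ k, 0 ≤ t k) (ht1 : ∀ k, t k ≤ 1)
    (htz : ∀ k, σ k = 0 → t k = 0)
    (htsum : ∑ k, t k = K) :
    ∑ k, (σ k ^ 2)⁻¹ * t k ≥ ∑ i : Fin K, (σ (Fin.castLE hK i) ^ 2)⁻¹ := by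
  set a : Fin n → ℝ := fun k => (σ k ^ 2)⁻¹ with ha
  have ha0 : ∀ k, 0 ≤ a k := fun k => by positivity
  rcases Nat.eq_zero_or_pos K with h0 | hKpos
  · subst h0
    simp only [Finset.univ_eq_empty, Finset.sum_empty, ge_iff_le]
    exact Finset.sum_nonneg fun k _ => mul_nonneg (ha0 k) (ht0 k)
  set F : Finset (Fin n) := Finset.univ.filter (fun k : Fin n => k.val < K) with hF
  have hFimg : F = Finset.image (Fin.castLE hK) Finset.univ := by
    ext k
    simp only [hF, Finset.mem_filter, Finset.mem_univ, true_and, Finset.mem_image]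
    constructor
    · intro h; exact ⟨⟨k.val, h⟩, Fin.ext rfl⟩
    · rintro ⟨i, rfl⟩; exact lt_of_lt_of_le i.2 le_rfl
  have hbij : ∀ f : Fin n → ℝ, ∑ i : Fin K, f (Fin.castLE hK i) = ∑ k ∈ F, f k := by
    intro f
    rw [hFimg, Finset.sum_image (fun i _ j _ h => Fin.castLE_inj.mp h)]
  set kK : Fin n := ⟨K - 1, lt_of_lt_of_le (Nat.sub_lt hKpos one_pos) hK⟩ with hkK
  have hσkK : 0 < σ kK := hpos ⟨K - 1, Nat.sub_lt hKpos one_pos⟩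
  set β : ℝ := a kK with hβ
  have hβle : ∀ k ∈ F, a k ≤ β := by
    intro k hk
    have hkval : k.val ≤ kK.val := by
      simp only [hF, Finset.mem_filter] at hk
      exact Nat.le_sub_one_of_lt hk.2
    have hσk : σ kK ≤ σ k := hdec hkval
    simp only [ha, hβ]
    apply inv_anti₀ (by positivity)
    exact pow_le_pow_left₀ (le_of_lt hσkK) hσk 2
  have hβge : ∀ k, k ∉ F → β * t k ≤ a k * t k := by
    intro k hk
    rcases eq_or_ne (σ k) 0 with hz | hz
    · rw [htz k hz]; ring_nf; exact le_rfl
    · have hσkpos : 0 < σ k := lt_of_le_of_ne (hσnonneg k) (Ne.symm hz)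
      have hkval : kK.val ≤ k.val := by
        simp only [hF, Finset.mem_filter, Finset.mem_univ, true_and, not_lt] at hk
        exact le_trans (Nat.sub_le K 1) hk
      have hσk : σ k ≤ σ kK := hdec hkval
      apply mul_le_mul_of_nonneg_right _ (ht0 k)
      simp only [ha, hβ]
      apply inv_anti₀ (by positivity)
      exact pow_le_pow_left₀ (le_of_lt hσkpos) hσk 2
  -- split sums
  have hsplit : ∀ f : Fin n → ℝ,
      (∑ k ∈ F, f k) + (∑ k ∈ Finset.univ.filter (fun k : Fin n => ¬ k.val < K), f k)
        = ∑ k, f k := by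
    intro f; rw [hF]; exact Finset.sum_filter_add_sum_filter_not _ _ _
  have hcard : (∑ k ∈ F, (1 : ℝ)) = K := by
    rw [← hbij fun _ => (1 : ℝ)]; simp
  have h1 := hsplit t
  have h2 := hsplit (fun k => a k * t k)
  set G := Finset.univ.filter (fun k : Fin n => ¬ k.val < K) with hG
  have hB : β * (∑ k ∈ G, t k) ≤ ∑ k ∈ G, a k * t k := by
    rw [Finset.mul_sum]
    exact Finset.sum_le_sum fun k hk => hβge k (by
      simp only [hG, Finset.mem_filter, Finset.mem_univ, true_and] at hk
      simp only [hF, Finset.mem_filter, Finset.mem_univ, true_and]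
      exact hk)
  have h3 : (∑ k ∈ F, a k) - (∑ k ∈ F, a k * t k) ≤ β * ((K : ℝ) - ∑ k ∈ F, t k) := by
    have : (∑ k ∈ F, (a k - a k * t k)) ≤ ∑ k ∈ F, (β - β * t k) := by
      apply Finset.sum_le_sum
      intro k hk
      have h1k : a k - a k * t k = a k * (1 - t k) := by ring
      have h2k : β - β * t k = β * (1 - t k) := by ring
      rw [h1k, h2k]
      exact mul_le_mul_of_nonneg_right (hβle k hk) (by linarith [ht1 k])
    rw [Finset.sum_sub_distrib, Finset.sum_sub_distrib] at this
    have hβsum : (∑ _k ∈ F, β) = β * K := by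
      rw [Finset.sum_const, ← hcard, Finset.sum_const]; simp; ring
    have e2 : (∑ k ∈ F, β * t k) = β * ∑ k ∈ F, t k := by rw [Finset.mul_sum]
    rw [mul_sub]
    linarith
  rw [ge_iff_le, hbij (fun k => a k)]
  -- β * ∑_G t ≤ ∑_G a t ; ∑_F a - ∑_F at ≤ β (K - ∑_F t) = β ∑_G t
  have hGt : (∑ k ∈ G, t k) = (K : ℝ) - ∑ k ∈ F, t k := by
    rw [← htsum, ← h1]; ring
  calc (∑ k ∈ F, a k) ≤ (∑ k ∈ F, a k * t k) + β * ((K : ℝ) - ∑ k ∈ F, t k) := by linarith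
    _ = (∑ k ∈ F, a k * t k) + β * (∑ k ∈ G, t k) := by rw [hGt]
    _ ≤ (∑ k ∈ F, a k * t k) + ∑ k ∈ G, a k * t k := by linarith
    _ = ∑ k, a k * t k := h2

lemma tfacts_aux {K n : ℕ} (u : Fin K → Fin n → ℝ)
    (huu : ∀ i j, u i ⬝ᵥ u j = if i = j then 1 else 0) :
    (∀ k, ∑ i, (u i k) ^ 2 ≤ 1) ∧ ((∑ k, ∑ i, (u i k) ^ 2) = K) := by
  set U : Matrix (Fin K) (Fin n) ℝ := Matrix.of u with hU
  have hUUt : U * Uᵀ = 1 := by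
    ext i j
    simp only [mul_apply, transpose_apply, one_apply, hU, Matrix.of_apply]
    rw [← huu i j]; rfl
  set P : Matrix (Fin n) (Fin n) ℝ := Uᵀ * U with hP
  have hPP : P * P = P := by
    rw [hP, Matrix.mul_assoc, ← Matrix.mul_assoc U, hUUt, Matrix.one_mul]
  have hPsym : Pᵀ = P := by rw [hP, transpose_mul, transpose_transpose]
  have hPt : ∀ k, P k k = ∑ i, (u i k) ^ 2 := by
    intro k
    rw [hP, mul_apply]
    exact Finset.sum_congr rfl fun i _ => by simp [hU, sq]
  constructor
  · intro k
    rw [← hPt k]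
    have h1 : P k k = ∑ l, (P k l) ^ 2 := by
      conv_lhs => rw [← hPP]
      rw [mul_apply]
      refine Finset.sum_congr rfl fun l _ => ?_
      rw [sq]
      congr 1
      exact (congrFun (congrFun hPsym l) k).symm.trans rfl
    have h2 : (P k k) ^ 2 ≤ ∑ l, (P k l) ^ 2 :=
      Finset.single_le_sum (f := fun l => P k l ^ 2) (fun l _ => sq_nonneg _) (Finset.mem_univ k)
    nlinarith [h1, h2]
  · have : (∑ k, ∑ i, (u i k) ^ 2) = Matrix.trace P := by
      rw [Matrix.trace]
      exact Finset.sum_congr rfl fun k _ => (hPt k).symm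
    rw [this, hP, Matrix.trace_mul_comm, hUUt, Matrix.trace_one]
    simp


/-- Optimality of the top-K singular directions: let J have singular values
σ₁ ≥ σ₂ ≥ … (encoded via an orthonormal eigenbasis v of JᵀJ with eigenvalues
σᵢ²), let w₁,…,w_K be orthonormal vectors in the column space of J and δᵢ the
minimal-norm preimages Jδᵢ = wᵢ. Then Σᵢ‖δᵢ‖₂² ≥ Σᵢ₌₁ᴷ 1/σᵢ², and the choice
δᵢ = vᵢ/σᵢ (whose images are the top-K left singular vectors) attains this
bound. -/
theorem stmt_11 {m n K : ℕ} (hK : K ≤ n) (J : Matrix (Fin m) (Fin n) ℝ)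
    (v : Fin n → (Fin n → ℝ)) (σ : Fin n → ℝ)
    (heig : ∀ i, (Jᵀ * J) *ᵥ v i = (σ i) ^ 2 • v i)
    (hvortho : ∀ i j, v i ⬝ᵥ v j = if i = j then 1 else 0)
    (hdec : Antitone σ) (hσnonneg : ∀ i, 0 ≤ σ i)
    (hpos : ∀ i : Fin K, 0 < σ (Fin.castLE hK i))
    (w : Fin K → (Fin m → ℝ)) (hwortho : ∀ i j, w i ⬝ᵥ w j = if i = j then 1 else 0)
    (δ : Fin K → (Fin n → ℝ))
    (hδ : ∀ i, J *ᵥ δ i = w i)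
    (hmin : ∀ i, ∀ x : Fin n → ℝ, J *ᵥ x = w i → δ i ⬝ᵥ δ i ≤ x ⬝ᵥ x) :
    (∑ i, δ i ⬝ᵥ δ i ≥ ∑ i : Fin K, ((σ (Fin.castLE hK i)) ^ 2)⁻¹) ∧
      (∀ i : Fin K, ∀ j : Fin K, ((σ (Fin.castLE hK i))⁻¹ • J *ᵥ v (Fin.castLE hK i)) ⬝ᵥ
          ((σ (Fin.castLE hK j))⁻¹ • J *ᵥ v (Fin.castLE hK j)) = if i = j then 1 else 0) ∧
      (∑ i : Fin K, ((σ (Fin.castLE hK i))⁻¹ • v (Fin.castLE hK i)) ⬝ᵥ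
          ((σ (Fin.castLE hK i))⁻¹ • v (Fin.castLE hK i)) =
        ∑ i : Fin K, ((σ (Fin.castLE hK i)) ^ 2)⁻¹) := by
  classical
  set V : Matrix (Fin n) (Fin n) ℝ := Matrix.of fun r k => v k r with hV
  have hVtV : Vᵀ * V = 1 := by
    ext i j
    simp only [mul_apply, transpose_apply, one_apply, hV, Matrix.of_apply]
    rw [← hvortho i j]; rfl
  have hVVt : V * Vᵀ = 1 := mul_eq_one_comm.mp hVtV
  set D : Matrix (Fin n) (Fin n) ℝ := Matrix.diagonal (fun k => σ k ^ 2) with hD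
  have hMV : (Jᵀ * J) * V = V * D := by
    ext r k
    rw [mul_apply, mul_apply]
    simp only [hV, Matrix.of_apply, hD, diagonal, mul_ite, mul_zero,
      Finset.sum_ite_eq', Finset.mem_univ, if_true]
    have h := congrFun (heig k) r
    simp only [mulVec, dotProduct, Pi.smul_apply, smul_eq_mul] at h
    rw [show (∑ s, (Jᵀ * J) r s * v k s) = ∑ s, v k s * (Jᵀ * J) r s from
      Finset.sum_congr rfl fun s _ => mul_comm _ _] at h ⊢
    rw [h]; ring
  have key : ∀ x y : Fin n → ℝ, (J *ᵥ x) ⬝ᵥ (J *ᵥ y) =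
      ∑ k, σ k ^ 2 * ((Vᵀ *ᵥ x) k * (Vᵀ *ᵥ y) k) := by
    intro x y
    rw [dotJJ_aux]
    have hM : Jᵀ * J = V * D * Vᵀ := by
      rw [← hMV, Matrix.mul_assoc, hVVt, Matrix.mul_one]
    rw [hM, ← mulVec_mulVec, ← mulVec_mulVec]
    rw [dotProduct_mulVec x V, ← mulVec_transpose]
    simp only [hD, mulVec_diagonal, dotProduct]
    exact Finset.sum_congr rfl fun k _ => by ring
  have hpars : ∀ x : Fin n → ℝ, x ⬝ᵥ x = ∑ k, ((Vᵀ *ᵥ x) k) ^ 2 := by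
    intro x
    have h := dotJJ_aux Vᵀ x x
    rw [transpose_transpose, hVVt, one_mulVec] at h
    rw [← h]
    simp [dotProduct, sq]
  refine ⟨?_, ?_, ?_⟩
  · -- the main inequality
    set c : Fin K → Fin n → ℝ := fun i => Vᵀ *ᵥ δ i with hc
    set u : Fin K → Fin n → ℝ := fun i k => σ k * c i k with hu
    have huu : ∀ i j, u i ⬝ᵥ u j = if i = j then 1 else 0 := by
      intro i j
      have h1 : u i ⬝ᵥ u j = ∑ k, σ k ^ 2 * (c i k * c j k) := by
        simp only [dotProduct, hu]
        exact Finset.sum_congr rfl fun k _ => by ring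
      rw [h1, ← key (δ i) (δ j), hδ, hδ, hwortho]
    obtain ⟨ht1, htsum⟩ := tfacts_aux u huu
    set t : Fin n → ℝ := fun k => ∑ i, (u i k) ^ 2 with ht
    have ht0 : ∀ k, 0 ≤ t k := fun k => Finset.sum_nonneg fun i _ => sq_nonneg _
    have htz : ∀ k, σ k = 0 → t k = 0 := by
      intro k hz
      simp [ht, hu, hz]
    have hge : ∀ i, ∑ k, (σ k ^ 2)⁻¹ * (u i k) ^ 2 ≤ δ i ⬝ᵥ δ i := by
      intro i
      rw [hpars (δ i)]
      apply Finset.sum_le_sum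
      intro k _
      rcases eq_or_ne (σ k) 0 with hz | hz
      · simp only [hu, hz, zero_mul]
        norm_num
        exact sq_nonneg _
      · have : (σ k ^ 2)⁻¹ * (u i k) ^ 2 = (c i k) ^ 2 := by
          simp only [hu]
          field_simp
        rw [this, hc]
    rw [ge_iff_le]
    calc ∑ i : Fin K, ((σ (Fin.castLE hK i)) ^ 2)⁻¹
        ≤ ∑ k, (σ k ^ 2)⁻¹ * t k :=
          sumE_aux hK σ hdec hσnonneg hpos t ht0 ht1 htz htsum
      _ = ∑ k, ∑ i, (σ k ^ 2)⁻¹ * (u i k) ^ 2 := by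
          refine Finset.sum_congr rfl fun k _ => ?_
          rw [ht, Finset.mul_sum]
      _ = ∑ i, ∑ k, (σ k ^ 2)⁻¹ * (u i k) ^ 2 := Finset.sum_comm
      _ ≤ ∑ i, δ i ⬝ᵥ δ i := Finset.sum_le_sum fun i _ => hge i
  · -- orthonormality of images
    intro i j
    rw [smul_dotProduct, dotProduct_smul, dotJJ_aux, heig, dotProduct_smul, hvortho]
    simp only [Fin.castLE_inj]
    by_cases h : i = j
    · subst h
      simp only [if_pos rfl, if_true]
      have hσ : σ (Fin.castLE hK i) ≠ 0 := (hpos i).ne'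
      field_simp
      simp only [smul_eq_mul, mul_one]
      field_simp
    · simp [h]
  · -- value of the optimal sum
    refine Finset.sum_congr rfl fun i _ => ?_
    rw [smul_dotProduct, dotProduct_smul, hvortho, if_pos rfl]
    simp only [smul_eq_mul, mul_one]
    rw [sq, mul_inv]
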